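/- Let α and α' be strategy profiles that agree at every coordinate n ≠ k, with α k > 0 and α' k > 0. Then φ α − φ α' = w k * (Υ k α − Υ k α'). -/

import Mathlib

/-- If two profiles differ only at user `k`, with `α k > 0` and `α' k > 0`,
then the change in the potential equals `w k` times the change in the interference of `k`. -/
theorem potential_diff_offload_offload (K M : ℕ) (p h : Fin K → ℝ)
    (hp : ∀ k, 0 < p k) (hh : ∀ k, 0 < h k)
    (w : Fin K → ℝ) (hw : ∀ k, w k = p k * h k)
    (V : Fin K → ℝ)
    (Υ : Fin K → (Fin K → Fin (M + 1)) → ℝ)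
    (hΥ : ∀ k α, Υ k α =
      ∑ n ∈ (Finset.univ.erase k).filter (fun n => α n = α k), w n)
    (φ : (Fin K → Fin (M + 1)) → ℝ)
    (hφ : ∀ α, φ α =
      (1 / 2) * ∑ k : Fin K, ∑ n ∈ Finset.univ.erase k,
          w k * w n * (if α n = α k then (1 : ℝ) else 0) * (if 0 < α k then (1 : ℝ) else 0)
      + ∑ k : Fin K, w k * V k * (if α k = 0 then (1 : ℝ) else 0))
    (k : Fin K) (α α' : Fin K → Fin (M + 1))
    (hagree : ∀ n, n ≠ k → α n = α' n)
    (hk : 0 < α k) (hk' : 0 < α' k) :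
    φ α - φ α' = w k * (Υ k α - Υ k α') := by
  have hne0 : α k ≠ 0 := Fin.pos_iff_ne_zero.mp hk
  have hne0' : α' k ≠ 0 := Fin.pos_iff_ne_zero.mp hk'
  set g : (Fin K → Fin (M + 1)) → Fin K → ℝ := fun β m =>
    ∑ n ∈ Finset.univ.erase m,
      w m * w n * (if β n = β m then (1 : ℝ) else 0) * (if 0 < β m then (1 : ℝ) else 0)
    with hg
  set u : (Fin K → Fin (M + 1)) → ℝ := fun β =>
    ∑ n ∈ Finset.univ.erase k, (if β n = β k then w n else 0) with hu
  have hΥu : ∀ β, Υ k β = u β := by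
    intro β
    rw [hΥ, hu, Finset.sum_filter]
  -- the diagonal term
  have hgk : ∀ β : Fin K → Fin (M + 1), 0 < β k → g β k = w k * u β := by
    intro β hβ
    simp only [hg, hu]
    rw [Finset.mul_sum]
    apply Finset.sum_congr rfl
    intro n _
    rw [if_pos hβ, mul_one]
    by_cases hn : β n = β k
    · rw [if_pos hn, if_pos hn]; ring
    · rw [if_neg hn, if_neg hn]; ring
  -- off-diagonal differences
  have hoff : ∀ β : Fin K → Fin (M + 1), 0 < β k →
      (∑ m ∈ Finset.univ.erase k,
        w m * w k * (if β k = β m then (1 : ℝ) else 0) * (if 0 < β m then (1 : ℝ) else 0))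
      = w k * u β := by
    intro β hβ
    simp only [hu]
    rw [Finset.mul_sum]
    apply Finset.sum_congr rfl
    intro m _
    by_cases hm : β m = β k
    · have hpos : 0 < β m := hm ▸ hβ
      rw [if_pos hm, if_pos hm.symm, if_pos hpos]; ring
    · have hm2 : ¬ β k = β m := fun hx => hm hx.symm
      rw [if_neg hm, if_neg hm2]; ring
  have hsplit : ∀ β : Fin K → Fin (M + 1), ∀ m : Fin K, m ≠ k →
      g β m = (∑ n ∈ (Finset.univ.erase m).erase k,
          w m * w n * (if β n = β m then (1 : ℝ) else 0) * (if 0 < β m then (1 : ℝ) else 0))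
        + w m * w k * (if β k = β m then (1 : ℝ) else 0) * (if 0 < β m then (1 : ℝ) else 0) := by
    intro β m hm
    simp only [hg]
    rw [← Finset.add_sum_erase _ _
      (Finset.mem_erase.mpr ⟨Ne.symm hm, Finset.mem_univ k⟩)]
    ring
  -- the common (unchanged) part
  have hcommon : ∀ m : Fin K, m ≠ k →
      (∑ n ∈ (Finset.univ.erase m).erase k,
          w m * w n * (if α n = α m then (1 : ℝ) else 0) * (if 0 < α m then (1 : ℝ) else 0))
      = (∑ n ∈ (Finset.univ.erase m).erase k,
          w m * w n * (if α' n = α' m then (1 : ℝ) else 0) * (if 0 < α' m then (1 : ℝ) else 0)) := by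
    intro m hm
    apply Finset.sum_congr rfl
    intro n hn
    have hn' : n ≠ k := Finset.ne_of_mem_erase hn
    rw [hagree n hn', hagree m hm]
    -- V-terms
  have hV : (∑ m : Fin K, w m * V m * (if α m = 0 then (1 : ℝ) else 0))
      = ∑ m : Fin K, w m * V m * (if α' m = 0 then (1 : ℝ) else 0) := by
    apply Finset.sum_congr rfl
    intro m _
    by_cases hm : m = k
    · subst hm; simp [hne0, hne0']
    · rw [hagree m hm]
  -- main double sums
  have hA : ∀ β : Fin K → Fin (M + 1),
      (∑ m : Fin K, g β m) = g β k + ∑ m ∈ Finset.univ.erase k, g β m := by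
    intro β
    rw [Finset.add_sum_erase _ _ (Finset.mem_univ k)]
  have hAdiff : (∑ m : Fin K, g α m) - (∑ m : Fin K, g α' m)
      = 2 * w k * (u α - u α') := by
    rw [hA α, hA α', hgk α hk, hgk α' hk']
    have h1 : (∑ m ∈ Finset.univ.erase k, g α m) - (∑ m ∈ Finset.univ.erase k, g α' m)
        = w k * u α - w k * u α' := by
      rw [← Finset.sum_sub_distrib]
      have : ∀ m ∈ Finset.univ.erase k, g α m - g α' m
          = w m * w k * (if α k = α m then (1 : ℝ) else 0) * (if 0 < α m then (1 : ℝ) else 0)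
          - w m * w k * (if α' k = α' m then (1 : ℝ) else 0) * (if 0 < α' m then (1 : ℝ) else 0) := by
        intro m hm
        have hm' : m ≠ k := Finset.ne_of_mem_erase hm
        rw [hsplit α m hm', hsplit α' m hm', hcommon m hm']
        ring
      rw [Finset.sum_congr rfl this, Finset.sum_sub_distrib, hoff α hk, hoff α' hk']
    linarith
  rw [hφ α, hφ α', ← hV, hΥu α, hΥu α']
  have := hAdiff
  simp only [← hg] at *
  linarith
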